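/- Construct G from a Sperner hypergraph H with edges A_1,…,A_m as follows: take vertex set A = ∪A_i with enough edges so that every vertex of A has a neighbor in each A_i, and for each minimal transversal T of H add a new vertex v_T adjacent exactly to T. Then every total dominating set of G contains some A_i. -/

import Mathlib

def IsTDS {V : Type*} (G : SimpleGraph V) (S : Set V) : Prop :=
  ∀ v : V, ∃ u ∈ S, G.Adj v u

def IsMinTDS {V : Type*} (G : SimpleGraph V) (S : Set V) : Prop :=
  IsTDS G S ∧ ∀ T ⊂ S, ¬ IsTDS G T

/-- In the graph constructed from a Sperner hypergraph A₁,…,Aₘ (every vertex of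
⋃Aᵢ has a neighbor in each Aᵢ, and each minimal transversal T is the neighborhood
of some vertex), every total dominating set contains some Aᵢ. -/
theorem stmt_17 {V : Type*} [Fintype V] (G : SimpleGraph V)
    {m : ℕ} (hm : 0 < m) (A : Fin m → Set V)
    (hne : ∀ i, (A i).Nonempty)
    (hSperner : ∀ i j, i ≠ j → ¬ A i ⊆ A j)
    (hU : ∀ v ∈ ⋃ i, A i, ∀ i, ∃ u ∈ A i, G.Adj v u)
    (hT : ∀ T : Set V, (∀ i, (T ∩ A i).Nonempty) →
      (∀ T' ⊂ T, ¬ ∀ i, (T' ∩ A i).Nonempty) →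
      ∃ w : V, G.neighborSet w = T) :
    ∀ S : Set V, IsTDS G S → ∃ i, A i ⊆ S := by
  classical
  intro S hS
  by_contra h
  push_neg at h
  have hSc : ∀ i, ((Sᶜ : Set V) ∩ A i).Nonempty := by
    intro i
    obtain ⟨x, hxA, hxS⟩ := Set.not_subset.mp (h i)
    exact ⟨x, hxS, hxA⟩
  let P : Finset V → Prop := fun t => ∀ i, ((↑t : Set V) ∩ A i).Nonempty
  have hP0 : P Sᶜ.toFinset := by
    intro i; simpa using hSc i
  set F := (Sᶜ.toFinset.powerset).filter P with hFdef
  have hF : Sᶜ.toFinset ∈ F :=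
    Finset.mem_filter.mpr ⟨Finset.mem_powerset_self _, hP0⟩
  obtain ⟨t, htF, hmin⟩ : ∃ t ∈ F, ∀ x ∈ F, ¬ x < t := by
    obtain ⟨t, ht⟩ := Finset.exists_minimal (s := F) ⟨_, hF⟩
    exact ⟨t, ht.1, fun x hx hlt => ht.not_lt hx hlt⟩
  rw [hFdef, Finset.mem_filter, Finset.mem_powerset] at htF
  obtain ⟨htsub, htP⟩ := htF
  have hmin' : ∀ T' ⊂ (↑t : Set V), ¬ ∀ i, (T' ∩ A i).Nonempty := by
    intro T' hT'sub hPT'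
    have hfin : T'.Finite := Set.toFinite T'
    have hsub : T'.toFinset ⊂ t := by
      rw [Finset.ssubset_iff_subset_ne]
      constructor
      · intro x hx
        have : x ∈ T' := Set.mem_toFinset.mp hx
        exact_mod_cast hT'sub.1 this
      · intro heq
        apply hT'sub.2
        intro x hx
        have : x ∈ T'.toFinset := heq ▸ hx
        exact Set.mem_toFinset.mp this
    have hmem : T'.toFinset ∈ F := by
      rw [hFdef, Finset.mem_filter, Finset.mem_powerset]
      refine ⟨hsub.1.trans htsub, ?_⟩
      intro i
      obtain ⟨x, hx1, hx2⟩ := hPT' i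
      exact ⟨x, by simpa using hx1, hx2⟩
    exact hmin _ hmem (Finset.lt_iff_ssubset.mpr hsub)
  obtain ⟨w, hw⟩ := hT (↑t) htP hmin'
  obtain ⟨u, huS, hadj⟩ := hS w
  have hut : u ∈ (↑t : Set V) := hw ▸ hadj
  have : u ∈ Sᶜ := Set.mem_toFinset.mp (htsub hut)
  exact this huS
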